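/- Let p_f : ℝ → EuclideanSpace ℝ (Fin 3) be twice differentiable in a neighborhood of s₀ with ‖p_f'(s)‖ = 1 for all s, suppose k(s) := ‖p_f''(s)‖ ≠ 0 for all s in a neighborhood of s₀, and suppose the normal n(s) := p_f''(s)/k(s) is differentiable at s₀. Then the binormal b(s) := t(s) × n(s) is differentiable at s₀ and b'(s₀) = −τ(s₀) n(s₀), where τ(s₀) := ⟪b(s₀), n'(s₀)⟫. -/

import Mathlib

open scoped RealInnerProductSpace Matrix

/-- Cross product on `EuclideanSpace ℝ (Fin 3)`. -/
noncomputable def cross3 (u v : EuclideanSpace ℝ (Fin 3)) : EuclideanSpace ℝ (Fin 3) :=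
  (WithLp.equiv 2 (Fin 3 → ℝ)).symm
    ![u 1 * v 2 - u 2 * v 1, u 2 * v 0 - u 0 * v 2, u 0 * v 1 - u 1 * v 0]

lemma cross3_apply (u v : EuclideanSpace ℝ (Fin 3)) (i : Fin 3) :
    cross3 u v i = ![u 1 * v 2 - u 2 * v 1, u 2 * v 0 - u 0 * v 2, u 0 * v 1 - u 1 * v 0] i := rfl

-- vector identities
lemma cross3_cross3 (a b c : EuclideanSpace ℝ (Fin 3)) :
    cross3 a (cross3 b c) = ⟪a,c⟫ • b - ⟪a,b⟫ • c := by
  ext i; fin_cases i <;>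
    simp [cross3_apply, PiLp.inner_apply, Fin.sum_univ_three, PiLp.smul_apply, PiLp.sub_apply,
      smul_eq_mul] <;> ring

lemma inner_self_cross3 (a c : EuclideanSpace ℝ (Fin 3)) : ⟪a, cross3 a c⟫ = 0 := by
  simp [cross3_apply, PiLp.inner_apply, Fin.sum_univ_three]; ring

lemma inner_cross3_left (a b c : EuclideanSpace ℝ (Fin 3)) :
    ⟪b, cross3 a c⟫ = -⟪cross3 a b, c⟫ := by
  simp [cross3_apply, PiLp.inner_apply, Fin.sum_univ_three]; ring

lemma cross3_lagrange (a b c d : EuclideanSpace ℝ (Fin 3)) :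
    ⟪cross3 a b, cross3 c d⟫ = ⟪a,c⟫ * ⟪b,d⟫ - ⟪a,d⟫ * ⟪b,c⟫ := by
  simp [cross3_apply, PiLp.inner_apply, Fin.sum_univ_three]; ring

lemma cross3_smul_left (r : ℝ) (a b : EuclideanSpace ℝ (Fin 3)) :
    cross3 (r • a) b = r • cross3 a b := by
  ext i; fin_cases i <;> simp [cross3_apply, PiLp.smul_apply, smul_eq_mul] <;> ring

lemma cross3_self (a : EuclideanSpace ℝ (Fin 3)) : cross3 a a = 0 := by
  ext i; fin_cases i <;> simp [cross3_apply] <;> ring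

lemma cross3_neg (a b : EuclideanSpace ℝ (Fin 3)) : cross3 a b = - cross3 b a := by
  ext i; fin_cases i <;> simp [cross3_apply, PiLp.neg_apply] <;> ring

lemma cross3_zero_right (a : EuclideanSpace ℝ (Fin 3)) : cross3 a 0 = 0 := by
  ext i; fin_cases i <;> simp [cross3_apply]

/-- key algebraic lemma -/
lemma cross3_key (u v w : EuclideanSpace ℝ (Fin 3))
    (hu : ⟪u,u⟫ = 1) (hv : ⟪v,v⟫ = 1) (huv : ⟪u,v⟫ = 0) (hvw : ⟪v,w⟫ = 0) :
    cross3 u w = (-⟪cross3 u v, w⟫) • v := by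
  set x := cross3 u w with hx
  set b := cross3 u v with hb
  have hxu : ⟪u, x⟫ = 0 := inner_self_cross3 u w
  have hbx : ⟪b, x⟫ = 0 := by
    rw [hb, hx, cross3_lagrange, hu, hvw, real_inner_comm u v, huv]; ring
  have hveq : v = cross3 b u := by
    rw [hb, cross3_neg, cross3_cross3, huv, hu]; simp
  have hxv : cross3 x v = 0 := by
    rw [hveq, cross3_cross3, real_inner_comm u x, hxu, real_inner_comm b x, hbx]
    simp
  have hvx : cross3 v x = 0 := by rw [cross3_neg, hxv]; simp
  have h1 : cross3 v (cross3 v x) = ⟪v,x⟫ • v - ⟪v,v⟫ • x := cross3_cross3 v v x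
  rw [hvx, cross3_zero_right, hv, one_smul] at h1
  have hx2 : x = ⟪v,x⟫ • v := by
    have := h1.symm
    linear_combination (norm := module) -this
  rw [hx2, hx, inner_cross3_left, ← hb]

noncomputable def crossCLM :
    EuclideanSpace ℝ (Fin 3) →L[ℝ] EuclideanSpace ℝ (Fin 3) →L[ℝ] EuclideanSpace ℝ (Fin 3) :=
  LinearMap.toContinuousLinearMap
  { toFun := fun u => LinearMap.toContinuousLinearMap
      { toFun := cross3 u
        map_add' := by
          intro x y; ext i; fin_cases i <;>
            simp [cross3_apply, PiLp.add_apply] <;> ring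
        map_smul' := by
          intro r x; ext i; fin_cases i <;>
            simp [cross3_apply, PiLp.smul_apply, smul_eq_mul] <;> ring }
    map_add' := by
      intro x y; apply ContinuousLinearMap.ext; intro v; ext i; fin_cases i <;>
        simp [cross3_apply, PiLp.add_apply, LinearMap.toContinuousLinearMap] <;> ring
    map_smul' := by
      intro r x; apply ContinuousLinearMap.ext; intro v; ext i; fin_cases i <;>
        simp [cross3_apply, PiLp.smul_apply, smul_eq_mul, LinearMap.toContinuousLinearMap] <;> ring }

@[simp] lemma crossCLM_apply (u v : EuclideanSpace ℝ (Fin 3)) : crossCLM u v = cross3 u v := rfl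

/-- If `g` has derivative `g'` at `x` and `‖g‖` is eventually constant, `⟪g x, g'⟫ = 0`. -/
lemma inner_deriv_zero_of_norm_const {g : ℝ → EuclideanSpace ℝ (Fin 3)} {g' : EuclideanSpace ℝ (Fin 3)}
    {x : ℝ} {c : ℝ} (hg : HasDerivAt g g' x) (hc : ∀ᶠ s in nhds x, ‖g s‖ = c) :
    ⟪g x, g'⟫ = 0 := by
  have h1 : HasDerivAt (fun s => ⟪g s, g s⟫) (⟪g x, g'⟫ + ⟪g', g x⟫) x := hg.inner ℝ hg
  have h2 : HasDerivAt (fun s => ⟪g s, g s⟫) 0 x := by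
    refine (hasDerivAt_const x (c^2)).congr_of_eventuallyEq ?_
    filter_upwards [hc] with s hs
    rw [real_inner_self_eq_norm_sq, hs]
  have := h1.unique h2
  rw [real_inner_comm (g x) g'] at this
  linarith

/-- Tangent vector of an arc-length parameterized curve. -/
noncomputable def tang (p_f : ℝ → EuclideanSpace ℝ (Fin 3)) (s : ℝ) : EuclideanSpace ℝ (Fin 3) :=
  deriv p_f s

/-- Curvature. -/
noncomputable def curv (p_f : ℝ → EuclideanSpace ℝ (Fin 3)) (s : ℝ) : ℝ :=
  ‖deriv (deriv p_f) s‖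

/-- Normal vector. -/
noncomputable def nor (p_f : ℝ → EuclideanSpace ℝ (Fin 3)) (s : ℝ) : EuclideanSpace ℝ (Fin 3) :=
  (curv p_f s)⁻¹ • deriv (deriv p_f) s

/-- Binormal vector. -/
noncomputable def binor (p_f : ℝ → EuclideanSpace ℝ (Fin 3)) (s : ℝ) : EuclideanSpace ℝ (Fin 3) :=
  cross3 (tang p_f s) (nor p_f s)

/-- Torsion: `τ(s) = ⟪b(s), n'(s)⟫`. -/
noncomputable def tors (p_f : ℝ → EuclideanSpace ℝ (Fin 3)) (s : ℝ) : ℝ :=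
  ⟪binor p_f s, deriv (nor p_f) s⟫

theorem serret_frenet_binormal_derivative
    (p_f : ℝ → EuclideanSpace ℝ (Fin 3)) (s₀ : ℝ)
    (hd1 : ∀ᶠ s in nhds s₀, DifferentiableAt ℝ p_f s)
    (hd2 : ∀ᶠ s in nhds s₀, DifferentiableAt ℝ (deriv p_f) s)
    (hunit : ∀ s : ℝ, ‖deriv p_f s‖ = 1)
    (hk : ∀ᶠ s in nhds s₀, curv p_f s ≠ 0)
    (hn : DifferentiableAt ℝ (nor p_f) s₀) :
    DifferentiableAt ℝ (binor p_f) s₀ ∧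
      deriv (binor p_f) s₀ = (-(tors p_f s₀)) • nor p_f s₀ := by

  have hk0 : curv p_f s₀ ≠ 0 := hk.self_of_nhds
  -- derivatives of t and n
  have ht : HasDerivAt (deriv p_f) (deriv (deriv p_f) s₀) s₀ :=
    hd2.self_of_nhds.hasDerivAt
  have hn' : HasDerivAt (nor p_f) (deriv (nor p_f) s₀) s₀ := hn.hasDerivAt
  -- t'' = k • n
  have hkn : deriv (deriv p_f) s₀ = curv p_f s₀ • nor p_f s₀ := by
    rw [nor, smul_smul, mul_inv_cancel₀ hk0, one_smul]
  -- binor has derivative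
  have hb : HasDerivAt (binor p_f)
      (cross3 (deriv (deriv p_f) s₀) (nor p_f s₀) +
        cross3 (deriv p_f s₀) (deriv (nor p_f) s₀)) s₀ := by
    have hc : HasDerivAt (fun s => crossCLM (deriv p_f s))
        (crossCLM (deriv (deriv p_f) s₀)) s₀ :=
      crossCLM.hasFDerivAt.comp_hasDerivAt s₀ ht
    have := hc.clm_apply hn'
    exact this
  -- norm of n is eventually 1
  have hnorm_n : ∀ᶠ s in nhds s₀, ‖nor p_f s‖ = 1 := by
    filter_upwards [hk] with s hs
    simp only [curv] at hs
    simp only [nor, norm_smul, norm_inv, Real.norm_eq_abs, curv, abs_norm]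
    exact inv_mul_cancel₀ hs
  -- inner products
  have htt : ⟪deriv p_f s₀, deriv p_f s₀⟫ = 1 := by
    rw [real_inner_self_eq_norm_sq, hunit s₀]; norm_num
  have hnn : ⟪nor p_f s₀, nor p_f s₀⟫ = 1 := by
    rw [real_inner_self_eq_norm_sq, hnorm_n.self_of_nhds]; norm_num
  have htd : ⟪deriv p_f s₀, deriv (deriv p_f) s₀⟫ = 0 := by
    exact inner_deriv_zero_of_norm_const (c := 1) ht (Filter.Eventually.of_forall hunit)
  have htn : ⟪deriv p_f s₀, nor p_f s₀⟫ = 0 := by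
    rw [nor, real_inner_smul_right, htd, mul_zero]
  have hnd : ⟪nor p_f s₀, deriv (nor p_f) s₀⟫ = 0 :=
    inner_deriv_zero_of_norm_const hn' hnorm_n
  -- compute the derivative value
  have hval : cross3 (deriv (deriv p_f) s₀) (nor p_f s₀) +
      cross3 (deriv p_f s₀) (deriv (nor p_f) s₀) = (-(tors p_f s₀)) • nor p_f s₀ := by
    rw [hkn, cross3_smul_left, cross3_self, smul_zero, zero_add]
    have := cross3_key (deriv p_f s₀) (nor p_f s₀) (deriv (nor p_f) s₀) htt hnn htn hnd
    rw [this]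
    simp only [tors, binor, tang]
  exact ⟨hb.differentiableAt, by rw [hb.deriv, hval]⟩
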